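/- Let K be a commutative ring and let X be a based simplicial set. There is a natural isomorphism of chain complexes of K-modules φ : s Ñ_*(X; K) → Ñ_*(ΣX; K), defined on generators by φ(s x) = (x, 1) for each non-degenerate simplex x of X, where s Ñ_*(X; K) is the suspension of the reduced normalized chain complex of X (the complex with (s V)_k = V_{k−1} and differential given by the Koszul sign rule, i.e. d(s v) = − s (d v)), and Ñ_*(ΣX; K) is the reduced normalized chain complex of the reduced suspension ΣX. Naturality means that for every based simplicial map f : X → Y the isomorphisms commute with the induced maps on reduced normalized chains. -/

import Mathlib

open Classical

/-- A based simplicial set, described combinatorially: a family of types of `n`-simplices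
with a basepoint in each dimension, face maps `d n i : X (n+1) → X n` (for `i ≤ n+1`) and
degeneracy maps `s n i : X n → X (n+1)` (for `i ≤ n`), satisfying the simplicial
identities, and such that the basepoint simplices are preserved by all faces and
degeneracies. -/
structure BasedSSet where
  X : ℕ → Type
  pt : ∀ n, X n
  d : ∀ n, ℕ → X (n + 1) → X n
  s : ∀ n, ℕ → X n → X (n + 1)
  d_pt : ∀ n i, i ≤ n + 1 → d n i (pt (n + 1)) = pt n
  s_pt : ∀ n i, i ≤ n → s n i (pt n) = pt (n + 1)
  dd : ∀ n i j, i < j → j ≤ n + 2 → ∀ x : X (n + 2),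
      d n i (d (n + 1) j x) = d n (j - 1) (d (n + 1) i x)
  ss : ∀ n i j, i ≤ j → j ≤ n → ∀ x : X n,
      s (n + 1) i (s n j x) = s (n + 1) (j + 1) (s n i x)
  ds_lt : ∀ n i j, i < j → j ≤ n + 1 → ∀ x : X (n + 1),
      d (n + 1) i (s (n + 1) j x) = s n (j - 1) (d n i x)
  ds_eq : ∀ n j, j ≤ n → ∀ x : X n, d n j (s n j x) = x
  ds_eq' : ∀ n j, j ≤ n → ∀ x : X n, d n (j + 1) (s n j x) = x
  ds_gt : ∀ n i j, j + 1 < i → i ≤ n + 2 → j ≤ n → ∀ x : X (n + 1),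
      d (n + 1) i (s (n + 1) j x) = s n j (d n (i - 1) x)

/-- A simplex of the reduced suspension `ΣX` other than the basepoint: a pair `(x, j)`
with `1 ≤ j`, `x` an `m`-simplex of `X` with `m + j = n`, and `x` not the basepoint. -/
structure SuspCell (X : BasedSSet) (n : ℕ) where
  j : ℕ
  m : ℕ
  x : X.X m
  hj : 1 ≤ j
  hdim : m + j = n
  hx : x ≠ X.pt m

/-- The `n`-simplices of the reduced suspension `ΣX`: the basepoint `none` (the common
image of all the simplices `(*, j)` and `(x, 0)`) together with the cells `(x, j)`. -/
abbrev SuspSimplex (X : BasedSSet) (n : ℕ) : Type := Option (SuspCell X n)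

/-- The degeneracy maps of the reduced suspension:
`s_i (x, j) = (x, j+1)` for `i < j` and `s_i (x, j) = (s_{i-j} x, j)` for `i ≥ j`,
with the basepoint sent to the basepoint. -/
noncomputable def BasedSSet.suspS (X : BasedSSet) (n i : ℕ) :
    SuspSimplex X n → SuspSimplex X (n + 1)
  | none => none
  | some c =>
      if i < c.j then
        some ⟨c.j + 1, c.m, c.x, by omega, by have := c.hdim; omega, c.hx⟩
      else if h : X.s c.m (i - c.j) c.x = X.pt (c.m + 1) then none
      else some ⟨c.j, c.m + 1, X.s c.m (i - c.j) c.x, c.hj, by have := c.hdim; omega, h⟩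

/-- Non-degeneracy of a simplex: it is not of the form `s_i y`. -/
def BasedSSet.Nondeg (X : BasedSSet) : ∀ n, X.X n → Prop
  | 0, _ => True
  | n + 1, x => ∀ i, i ≤ n → ∀ y : X.X n, x ≠ X.s n i y

/-- Non-degeneracy of a simplex of the reduced suspension. -/
def SuspNondeg (X : BasedSSet) : ∀ n, SuspSimplex X n → Prop
  | 0, _ => True
  | n + 1, z => ∀ i, i ≤ n → ∀ y : SuspSimplex X n, z ≠ X.suspS n i y

/-- The face maps of `X`, as total functions `X m → X (m - 1)` (with a junk value in
dimension `0`). -/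
def BasedSSet.d' (X : BasedSSet) : ∀ m, ℕ → X.X m → X.X (m - 1)
  | 0, _, x => x
  | m + 1, i, x => X.d m i x

/-- The face maps of the reduced suspension:
`d_i (x, j) = (x, j - 1)` for `i < j` (which is the basepoint when `j = 1`) and
`d_i (x, j) = (d_{i-j} x, j)` for `i ≥ j`, with the basepoint sent to the basepoint. -/
noncomputable def BasedSSet.suspD (X : BasedSSet) (n i : ℕ) :
    SuspSimplex X (n + 1) → SuspSimplex X n
  | none => none
  | some c =>
      if i < c.j then
        if hj1 : c.j = 1 then none
        else some ⟨c.j - 1, c.m, c.x, by have := c.hj; omega,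
          by have := c.hdim; have := c.hj; omega, c.hx⟩
      else if hm : c.m = 0 then none
      else if h : X.d' c.m (i - c.j) c.x = X.pt (c.m - 1) then none
      else some ⟨c.j, c.m - 1, X.d' c.m (i - c.j) c.x, c.hj,
        by have := c.hdim; omega, h⟩

/-- The data needed to form a reduced normalized chain complex: a family of types of
simplices, basepoints, a non-degeneracy predicate and face maps. -/
structure ChainData where
  C : ℕ → Type
  pt : ∀ n, C n
  nd : ∀ n, C n → Prop
  face : ∀ n, ℕ → C (n + 1) → C n

/-- The chain data of a based simplicial set. -/
def BasedSSet.toData (X : BasedSSet) : ChainData :=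
  ⟨X.X, X.pt, X.Nondeg, X.d⟩

/-- The chain data of the reduced suspension of a based simplicial set. -/
noncomputable def BasedSSet.suspData (X : BasedSSet) : ChainData :=
  ⟨SuspSimplex X, fun _ => none, SuspNondeg X, X.suspD⟩

/-- The degree-`n` part of the reduced normalized chains over `K`: the free `K`-module on
the non-degenerate `n`-simplices other than the basepoint. -/
abbrev RedChains (K : Type) [CommRing K] (D : ChainData) (n : ℕ) : Type :=
  {x : D.C n // D.nd n x ∧ x ≠ D.pt n} →₀ K

/-- The class of a simplex in the reduced normalized chains: the corresponding generator
if it is non-degenerate and not the basepoint, and `0` otherwise. -/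
noncomputable def elemOf (K : Type) [CommRing K] (D : ChainData) (n : ℕ) (y : D.C n) :
    RedChains K D n :=
  if h : D.nd n y ∧ y ≠ D.pt n then Finsupp.single ⟨y, h⟩ 1 else 0

/-- The differential of the reduced normalized chains: the alternating sum of the face
maps, where degenerate faces and faces at the basepoint are set to `0`. -/
noncomputable def redD (K : Type) [CommRing K] (D : ChainData) (n : ℕ) :
    RedChains K D (n + 1) →ₗ[K] RedChains K D n :=
  Finsupp.lift (RedChains K D n) K
    {x : D.C (n + 1) // D.nd (n + 1) x ∧ x ≠ D.pt (n + 1)} fun x =>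
      ∑ i ∈ Finset.range (n + 2), ((-1 : K) ^ i) • elemOf K D n (D.face n i x.1)

/-- The underlying graded module of the suspension `s Ñ_*(X; K)` of the reduced
normalized chain complex of `X`: `(s V)_k = V_{k-1}`, with `(s V)_0 = 0`. -/
def SChain (K : Type) [CommRing K] (X : BasedSSet) : ℕ → Type
  | 0 => Empty →₀ K
  | n + 1 => RedChains K X.toData n

noncomputable instance (K : Type) [CommRing K] (X : BasedSSet) :
    ∀ n, AddCommGroup (SChain K X n)
  | 0 => inferInstanceAs (AddCommGroup (Empty →₀ K))
  | n + 1 => inferInstanceAs (AddCommGroup (RedChains K X.toData n))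

noncomputable instance (K : Type) [CommRing K] (X : BasedSSet) :
    ∀ n, Module K (SChain K X n)
  | 0 => inferInstanceAs (Module K (Empty →₀ K))
  | n + 1 => inferInstanceAs (Module K (RedChains K X.toData n))

/-- The differential of the suspension `s Ñ_*(X; K)`, with the Koszul sign rule:
`d (s v) = - s (d v)`. -/
noncomputable def sD (K : Type) [CommRing K] (X : BasedSSet) :
    ∀ n, SChain K X (n + 1) →ₗ[K] SChain K X n
  | 0 => 0
  | n + 1 => -redD K X.toData n

/-- A based simplicial map between based simplicial sets. -/
structure BasedHom (X Y : BasedSSet) where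
  f : ∀ n, X.X n → Y.X n
  hpt : ∀ n, f n (X.pt n) = Y.pt n
  hd : ∀ n i, i ≤ n + 1 → ∀ x : X.X (n + 1), f n (X.d n i x) = Y.d n i (f (n + 1) x)
  hs : ∀ n i, i ≤ n → ∀ x : X.X n, f (n + 1) (X.s n i x) = Y.s n i (f n x)

/-- The map induced on reduced normalized chains by a map of simplices (sending the
classes of degenerate or basepoint simplices to `0`). -/
noncomputable def chainMap (K : Type) [CommRing K] (D E : ChainData)
    (g : ∀ n, D.C n → E.C n) (n : ℕ) : RedChains K D n →ₗ[K] RedChains K E n :=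
  Finsupp.lift (RedChains K E n) K
    {x : D.C n // D.nd n x ∧ x ≠ D.pt n} fun x => elemOf K E n (g n x.1)

/-- The map induced on reduced suspensions by a based simplicial map. -/
noncomputable def suspMap {X Y : BasedSSet} (F : BasedHom X Y) (n : ℕ) :
    SuspSimplex X n → SuspSimplex Y n
  | none => none
  | some c =>
      if h : F.f c.m c.x = Y.pt c.m then none
      else some ⟨c.j, c.m, F.f c.m c.x, c.hj, c.hdim, h⟩

/-- The map induced on the suspended chain complexes `s Ñ_*(-; K)` by a based simplicial
map. -/
noncomputable def sChainMap (K : Type) [CommRing K] {X Y : BasedSSet} (F : BasedHom X Y) :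
    ∀ n, SChain K X n →ₗ[K] SChain K Y n
  | 0 => 0
  | n + 1 => chainMap K X.toData Y.toData F.f n

section SuspProofAux

variable {X : BasedSSet}

lemma mk_congr {n j j' m : ℕ} {x x' : X.X m} (hjj : j = j') (hxx : x = x')
    (h1 : 1 ≤ j) (h2 : m + j = n) (h3 : x ≠ X.pt m)
    (h1' : 1 ≤ j') (h2' : m + j' = n) (h3' : x' ≠ X.pt m) :
    (⟨j, m, x, h1, h2, h3⟩ : SuspCell X n) = ⟨j', m, x', h1', h2', h3'⟩ := by
  subst hjj hxx; rfl

lemma some_mk_inj {n j m j' m' : ℕ} {x : X.X m} {x' : X.X m'}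
    {h1 : 1 ≤ j} {h2 : m + j = n} {h3 : x ≠ X.pt m}
    {h1' : 1 ≤ j'} {h2' : m' + j' = n} {h3' : x' ≠ X.pt m'}
    (h : (some ⟨j, m, x, h1, h2, h3⟩ : SuspSimplex X n) = some ⟨j', m', x', h1', h2', h3'⟩) :
    j = j' ∧ m = m' ∧ HEq x x' := by
  have h' := Option.some.inj h
  rwa [SuspCell.mk.injEq] at h'

lemma suspNondeg_mk {n : ℕ} {x : X.X n} (hnd : X.Nondeg n x) (hx : x ≠ X.pt n)
    (h1 : 1 ≤ 1) (h2 : n + 1 = n + 1) :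
    SuspNondeg X (n + 1) (some ⟨1, n, x, h1, h2, hx⟩) := by
  intro i hi y heq
  cases y with
  | none => exact Option.some_ne_none _ heq
  | some c =>
    obtain ⟨j', m', x', hj', hdim', hx'⟩ := c
    by_cases hij : i < j'
    · simp only [BasedSSet.suspS, if_pos hij] at heq
      obtain ⟨hja, -, -⟩ := some_mk_inj heq
      omega
    · simp only [BasedSSet.suspS, if_neg hij] at heq
      split at heq
      · exact Option.some_ne_none _ heq
      · obtain ⟨hja, hma, hxa⟩ := some_mk_inj heq
        subst hma
        have hxe : x = X.s m' (i - j') x' := eq_of_heq hxa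
        exact hnd (i - j') (by omega) x' hxe

lemma j_eq_one {n j m : ℕ} {x : X.X m} (h1 : 1 ≤ j) (h2 : m + j = n + 1) (h3 : x ≠ X.pt m)
    (h : SuspNondeg X (n + 1) (some ⟨j, m, x, h1, h2, h3⟩)) : j = 1 := by
  by_contra hj
  refine h 0 (Nat.zero_le n) (some ⟨j - 1, m, x, by omega, by omega, h3⟩) ?_
  simp only [BasedSSet.suspS]
  rw [if_pos (show 0 < j - 1 by omega)]
  exact congrArg some (mk_congr (by omega) rfl _ _ _ _ _ _)

lemma nondeg_x {n : ℕ} {x : X.X n} (h1 : 1 ≤ 1) (h2 : n + 1 = n + 1) (h3 : x ≠ X.pt n)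
    (h : SuspNondeg X (n + 1) (some ⟨1, n, x, h1, h2, h3⟩)) : X.Nondeg n x := by
  cases n with
  | zero => trivial
  | succ k =>
    intro i hi y hxy
    by_cases hy : y = X.pt k
    · exact h3 (by rw [hxy, hy, X.s_pt k i hi])
    · refine h (i + 1) (by omega) (some ⟨1, k, y, le_refl 1, rfl, hy⟩) ?_
      simp only [BasedSSet.suspS]
      rw [if_neg (by omega)]
      have hs : X.s k (i + 1 - 1) y = x := hxy.symm
      rw [dif_neg (show ¬ X.s k (i + 1 - 1) y = X.pt (k + 1) from hs ▸ h3)]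
      exact congrArg some (mk_congr rfl hs.symm _ _ _ _ _ _)

noncomputable def suspEquiv (X : BasedSSet) (n : ℕ) :
    {x : X.toData.C n // X.toData.nd n x ∧ x ≠ X.toData.pt n} ≃
    {z : X.suspData.C (n + 1) // X.suspData.nd (n + 1) z ∧ z ≠ X.suspData.pt (n + 1)} :=
  Equiv.ofBijective
    (fun x => ⟨some ⟨1, n, x.1, le_refl 1, rfl, x.2.2⟩,
      suspNondeg_mk x.2.1 x.2.2 _ _, fun hc => Option.some_ne_none _ hc⟩)
    ⟨by
      intro a b hab
      have h' := congrArg Subtype.val hab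
      obtain ⟨-, -, hx⟩ := some_mk_inj h'
      exact Subtype.ext (eq_of_heq hx),
     by
      rintro ⟨z, hnd, hne⟩
      cases z with
      | none => exact absurd rfl hne
      | some c =>
        obtain ⟨j, m, x, hj, hdim, hx⟩ := c
        have hj1 : j = 1 := j_eq_one hj hdim hx hnd
        subst hj1
        have hm : m = n := by omega
        subst hm
        exact ⟨⟨x, nondeg_x hj hdim hx hnd, hx⟩, Subtype.ext rfl⟩⟩

noncomputable def optMk (X : BasedSSet) (n : ℕ) (y : X.X n) : SuspSimplex X (n + 1) :=
  if h : y = X.pt n then none else some ⟨1, n, y, le_refl 1, rfl, h⟩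

instance instEmptySusp0 (X : BasedSSet) :
    IsEmpty {z : X.suspData.C 0 // X.suspData.nd 0 z ∧ z ≠ X.suspData.pt 0} := by
  constructor
  rintro ⟨z, h1, h2⟩
  cases z with
  | none => exact h2 rfl
  | some c => have := c.hj; have := c.hdim; omega

lemma redchains0 (K : Type) [CommRing K] (X : BasedSSet) (v : RedChains K X.suspData 0) :
    v = 0 := Finsupp.ext fun a => isEmptyElim a

noncomputable def phi (K : Type) [CommRing K] (X : BasedSSet) :
    ∀ n, SChain K X n ≃ₗ[K] RedChains K X.suspData n
  | 0 => Finsupp.domLCongr (Equiv.equivOfIsEmpty Empty _)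
  | n + 1 => Finsupp.domLCongr (suspEquiv X n)

lemma elemOf_none (K : Type) [CommRing K] (X : BasedSSet) (m : ℕ) :
    elemOf K X.suspData m none = 0 := by
  simp only [elemOf]
  rw [dif_neg]
  rintro ⟨-, h⟩; exact h rfl


lemma phi_elem (K : Type) [CommRing K] (X : BasedSSet) (n : ℕ) (y : X.X n) :
    phi K X (n + 1) (elemOf K X.toData n y)
      = elemOf K X.suspData (n + 1) (optMk X n y) := by
  show Finsupp.domLCongr (suspEquiv X n) (elemOf K X.toData n y) = _
  by_cases hp : y = X.pt n
  · rw [show optMk X n y = none from dif_pos hp, elemOf_none,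
      show elemOf K X.toData n y = 0 from dif_neg (by rintro ⟨-, h⟩; exact h hp), map_zero]
  · by_cases hnd : X.Nondeg n y
    · rw [show elemOf K X.toData n y = Finsupp.single ⟨y, ⟨hnd, hp⟩⟩ 1 from dif_pos _,
        show optMk X n y = some ⟨1, n, y, le_refl 1, rfl, hp⟩ from dif_neg hp,
        show elemOf K X.suspData (n + 1) (some ⟨1, n, y, le_refl 1, rfl, hp⟩)
          = Finsupp.single ⟨some ⟨1, n, y, le_refl 1, rfl, hp⟩,
              ⟨suspNondeg_mk hnd hp _ _, fun hc => Option.some_ne_none _ hc⟩⟩ 1 from dif_pos _,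
        Finsupp.domLCongr_single]
      congr 1
    · rw [show elemOf K X.toData n y = 0 from dif_neg (fun h => hnd h.1), map_zero,
        show optMk X n y = some ⟨1, n, y, le_refl 1, rfl, hp⟩ from dif_neg hp,
        show elemOf K X.suspData (n + 1) (some ⟨1, n, y, le_refl 1, rfl, hp⟩) = 0 from
          dif_neg (fun h => hnd (nondeg_x _ _ hp h.1))]

lemma redD_single (K : Type) [CommRing K] (D : ChainData) (n : ℕ)
    (x : {x : D.C (n + 1) // D.nd (n + 1) x ∧ x ≠ D.pt (n + 1)}) (b : K) :
    redD K D n (Finsupp.single x b) =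
      b • ∑ i ∈ Finset.range (n + 2), ((-1 : K) ^ i) • elemOf K D n (D.face n i x.1) := by
  simp [redD, Finsupp.lift_apply, Finsupp.sum_single_index]

lemma chainMap_single (K : Type) [CommRing K] (D E : ChainData) (g : ∀ n, D.C n → E.C n)
    (n : ℕ) (x : {x : D.C n // D.nd n x ∧ x ≠ D.pt n}) (b : K) :
    chainMap K D E g n (Finsupp.single x b) = b • elemOf K E n (g n x.1) := by
  simp [chainMap, Finsupp.lift_apply, Finsupp.sum_single_index]

lemma phi_single (K : Type) [CommRing K] (X : BasedSSet) (n : ℕ)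
    (x : {x : X.toData.C n // X.toData.nd n x ∧ x ≠ X.toData.pt n}) (b : K) :
    phi K X (n + 1) (Finsupp.single x b) = Finsupp.single (suspEquiv X n x) b := by
  show Finsupp.domLCongr (suspEquiv X n) (Finsupp.single x b) = _
  rw [Finsupp.domLCongr_single]

lemma phi_comm (K : Type) [CommRing K] (X : BasedSSet) (n : ℕ) (v : SChain K X (n + 1)) :
    phi K X n (sD K X n v) = redD K X.suspData n (phi K X (n + 1) v) := by
  cases n with
  | zero => exact (redchains0 K X _).trans (redchains0 K X _).symm
  | succ k =>
    suffices h : (phi K X (k + 1)).toLinearMap.comp (sD K X (k + 1))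
        = (redD K X.suspData (k + 1)).comp (phi K X (k + 2)).toLinearMap from
      LinearMap.congr_fun h v
    apply Finsupp.lhom_ext
    intro x b
    show phi K X (k + 1) (sD K X (k + 1) (Finsupp.single x b))
      = redD K X.suspData (k + 1) (phi K X (k + 2) (Finsupp.single x b))
    have hL : sD K X (k + 1) (Finsupp.single x b)
        = -(redD K X.toData k (Finsupp.single x b)) := rfl
    rw [hL]; erw [map_neg, redD_single, map_smul, map_sum, phi_single, redD_single]
    have hface : ∀ i, X.suspData.face (k + 1) (i + 1) (suspEquiv X (k + 1) x).1
        = optMk X k (X.d k i x.1) := by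
      intro i
      show X.suspD (k + 1) (i + 1) (some ⟨1, k + 1, x.1, le_refl 1, rfl, x.2.2⟩) = _
      rfl
    have h0 : X.suspData.face (k + 1) 0 (suspEquiv X (k + 1) x).1 = none := rfl
    have hterm : ∀ i ∈ Finset.range (k + 2),
        ((-1 : K) ^ (i + 1)) • elemOf K X.suspData (k + 1) (optMk X k (X.d k i x.1))
        = -(((-1 : K) ^ i) • elemOf K X.suspData (k + 1) (optMk X k (X.d k i x.1))) := by
      intro i _
      rw [pow_succ, mul_comm, mul_smul, neg_one_smul]
    conv_rhs => rw [Finset.sum_range_succ']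
    simp only [hface, h0, elemOf_none, pow_zero, one_smul, smul_zero, add_zero]
    rw [Finset.sum_congr rfl hterm, Finset.sum_neg_distrib, smul_neg, neg_inj]
    have hf : X.toData.face = X.d := rfl
    simp only [hf, map_smul, phi_elem]
    congr 1
    refine Finset.sum_congr rfl fun i _ => ?_
    erw [map_smul, phi_elem]

lemma phi_nat (K : Type) [CommRing K] (X Y : BasedSSet) (F : BasedHom X Y) (n : ℕ)
    (v : SChain K X n) :
    phi K Y n (sChainMap K F n v) =
      chainMap K X.suspData Y.suspData (suspMap F) n (phi K X n v) := by
  cases n with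
  | zero => exact (redchains0 K Y _).trans (redchains0 K Y _).symm
  | succ k =>
    suffices h : (phi K Y (k + 1)).toLinearMap.comp (sChainMap K F (k + 1))
        = (chainMap K X.suspData Y.suspData (suspMap F) (k + 1)).comp
            (phi K X (k + 1)).toLinearMap from
      LinearMap.congr_fun h v
    apply Finsupp.lhom_ext
    intro x b
    show phi K Y (k + 1) (sChainMap K F (k + 1) (Finsupp.single x b))
      = chainMap K X.suspData Y.suspData (suspMap F) (k + 1) (phi K X (k + 1) (Finsupp.single x b))
    have hL : sChainMap K F (k + 1) (Finsupp.single x b)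
        = chainMap K X.toData Y.toData F.f k (Finsupp.single x b) := rfl
    rw [hL]; erw [chainMap_single, map_smul, phi_elem, phi_single, chainMap_single]
    congr 1

end SuspProofAux
theorem susp_chain_iso (K : Type) [CommRing K] :
    ∃ φ : ∀ (X : BasedSSet) (n : ℕ), SChain K X n ≃ₗ[K] RedChains K X.suspData n,
      (∀ (X : BasedSSet) (n : ℕ) (v : SChain K X (n + 1)),
          φ X n (sD K X n v) = redD K X.suspData n (φ X (n + 1) v)) ∧
      (∀ (X : BasedSSet) (m : ℕ) (x : {x : X.X m // X.Nondeg m x ∧ x ≠ X.pt m}),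
          ∃ h : SuspNondeg X (m + 1) (some ⟨1, m, x.1, le_refl 1, rfl, x.2.2⟩) ∧
              (some ⟨1, m, x.1, le_refl 1, rfl, x.2.2⟩ : SuspSimplex X (m + 1)) ≠ none,
            φ X (m + 1) (Finsupp.single x 1) =
              Finsupp.single ⟨some ⟨1, m, x.1, le_refl 1, rfl, x.2.2⟩, h⟩ 1) ∧
      (∀ (X Y : BasedSSet) (F : BasedHom X Y) (n : ℕ) (v : SChain K X n),
          φ Y n (sChainMap K F n v) =
            chainMap K X.suspData Y.suspData (suspMap F) n (φ X n v)) := by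
  refine ⟨phi K, phi_comm K, ?_, phi_nat K⟩
  intro X m x
  refine ⟨⟨suspNondeg_mk x.2.1 x.2.2 _ _, fun hc => Option.some_ne_none _ hc⟩, ?_⟩
  erw [phi_single]
  congr 1
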